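/- arXiv:2410.06824 — 2 statements merged into one kernel-verified Lean document; each statement's English description precedes it below -/
import Mathlib

section
/- Let X = [[1,0],[0,-1]], Y = [[0,1],[1,0]], Z = [[0,1],[-1,0]] be real 2×2 matrices. Then for all r, φ, θ ∈ ℝ, the matrix [[cosh(r)·cos(θ) + sinh(r)·cos(φ+θ), cosh(r)·sin(θ) + sinh(r)·sin(φ+θ)], [−cosh(r)·sin(θ) + sinh(r)·sin(φ+θ), cosh(r)·cos(θ) − sinh(r)·cos(φ+θ)]] equals the product exp(r·cos(φ)·X + r·sin(φ)·Y) · exp(θ·Z) of matrix exponentials. Equivalently, with Ψ : ℂ² → M₂(ℝ) defined by Ψ(x₁+iy₁, x₂+iy₂) = [[x₁+x₂, y₁+y₂],[y₁−y₂, x₂−x₁]], one has Ψ(sinh(r)·e^{i(φ+θ)}, cosh(r)·e^{iθ}) = exp(r·cos(φ)·X + r·sin(φ)·Y) · exp(θ·Z). -/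
open Real

noncomputable def Psi (z : ℂ × ℂ) : Matrix (Fin 2) (Fin 2) ℝ :=
  !![z.1.re + z.2.re, z.1.im + z.2.im; z.1.im - z.2.im, z.2.re - z.1.re]

section aux

variable {A : Type*} [NormedRing A] [NormedAlgebra ℝ A] [CompleteSpace A]

lemma exp_smul_of_sq_eq_neg_one (M : A) (h : M * M = -1) (t : ℝ) :
    NormedSpace.exp (t • M) = Real.cos t • 1 + Real.sin t • M := by
  let f := Complex.liftAux M h
  have hf : Continuous f := f.toLinearMap.continuous_of_finiteDimensional
  have h1 : t • M = f (t * Complex.I) := by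
    simp [f, Complex.liftAux_apply]
  letI : Algebra ℚ A := RestrictScalars.algebra ℚ ℝ A
  rw [h1, ← NormedSpace.map_exp f hf,
    ← Complex.exp_eq_exp_ℂ, Complex.exp_mul_I]
  simp [f, Complex.liftAux_apply, Algebra.algebraMap_eq_smul_one,
    Complex.cos_ofReal_re, Complex.sin_ofReal_re]

/-- algebra hom from ℝ × ℝ for an element squaring to 1 -/
noncomputable def splitHom (M : A) (h : M * M = 1) : (ℝ × ℝ) →ₐ[ℝ] A where
  toFun p := ((p.1 + p.2) / 2) • 1 + ((p.1 - p.2) / 2) • M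
  map_one' := by norm_num
  map_mul' p q := by
    show _ = (((p.1 + p.2) / 2) • 1 + ((p.1 - p.2) / 2) • M) *
        (((q.1 + q.2) / 2) • 1 + ((q.1 - q.2) / 2) • M)
    simp only [Prod.fst_mul, Prod.snd_mul, add_mul, mul_add, smul_mul_smul_comm, h,
      one_mul, mul_one]
    module
  map_zero' := by norm_num
  map_add' p q := by
    show _ = (((p.1 + p.2) / 2) • 1 + ((p.1 - p.2) / 2) • M) +
        (((q.1 + q.2) / 2) • 1 + ((q.1 - q.2) / 2) • M)
    simp only [Prod.fst_add, Prod.snd_add]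
    module
  commutes' r := by
    show ((r + r) / 2) • 1 + ((r - r) / 2) • M = _
    rw [Algebra.algebraMap_eq_smul_one]
    module

lemma exp_smul_of_sq_eq_one (M : A) (h : M * M = 1) (t : ℝ) :
    NormedSpace.exp (t • M) = Real.cosh t • 1 + Real.sinh t • M := by
  let f := splitHom M h
  have hf : Continuous f := f.toLinearMap.continuous_of_finiteDimensional
  have h1 : t • M = f (t, -t) := by
    show t • M = ((t + -t) / 2) • 1 + ((t - -t) / 2) • M
    ring_nf
    simp
  letI : Algebra ℚ A := RestrictScalars.algebra ℚ ℝ A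
  rw [h1, ← NormedSpace.map_exp f hf]
  have h2 : NormedSpace.exp ((t, -t) : ℝ × ℝ) = (Real.exp t, Real.exp (-t)) := by
    ext
    · rw [Prod.fst_exp, ← Real.exp_eq_exp_ℝ]
    · rw [Prod.snd_exp, ← Real.exp_eq_exp_ℝ]
  rw [h2]
  show ((Real.exp t + Real.exp (-t)) / 2) • 1 + ((Real.exp t - Real.exp (-t)) / 2) • M = _
  rw [Real.cosh_eq, Real.sinh_eq]

end aux

/-- For `X = [[1,0],[0,-1]]`, `Y = [[0,1],[1,0]]`, `Z = [[0,1],[-1,0]]` and all `r, φ, θ ∈ ℝ`,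
the matrix
`[[cosh r cos θ + sinh r cos(φ+θ), cosh r sin θ + sinh r sin(φ+θ)],
  [−cosh r sin θ + sinh r sin(φ+θ), cosh r cos θ − sinh r cos(φ+θ)]]`
equals `exp(r cos φ · X + r sin φ · Y) · exp(θ·Z)`; equivalently
`Ψ(sinh r · e^{i(φ+θ)}, cosh r · e^{iθ}) = exp(r cos φ · X + r sin φ · Y) · exp(θ·Z)`. -/
theorem ads_coordinates_eq_exp_mul_exp (r φ θ : ℝ) :
    (!![Real.cosh r * Real.cos θ + Real.sinh r * Real.cos (φ + θ),
        Real.cosh r * Real.sin θ + Real.sinh r * Real.sin (φ + θ);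
        -Real.cosh r * Real.sin θ + Real.sinh r * Real.sin (φ + θ),
        Real.cosh r * Real.cos θ - Real.sinh r * Real.cos (φ + θ)] : Matrix (Fin 2) (Fin 2) ℝ)
      = NormedSpace.exp
          ((r * Real.cos φ) • (!![1, 0; 0, -1] : Matrix (Fin 2) (Fin 2) ℝ)
            + (r * Real.sin φ) • (!![0, 1; 1, 0] : Matrix (Fin 2) (Fin 2) ℝ))
        * NormedSpace.exp (θ • (!![0, 1; -1, 0] : Matrix (Fin 2) (Fin 2) ℝ)) ∧
    Psi ((Real.sinh r : ℂ) * Complex.exp (Complex.I * (φ + θ)),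
         (Real.cosh r : ℂ) * Complex.exp (Complex.I * θ))
      = NormedSpace.exp
          ((r * Real.cos φ) • (!![1, 0; 0, -1] : Matrix (Fin 2) (Fin 2) ℝ)
            + (r * Real.sin φ) • (!![0, 1; 1, 0] : Matrix (Fin 2) (Fin 2) ℝ))
        * NormedSpace.exp (θ • (!![0, 1; -1, 0] : Matrix (Fin 2) (Fin 2) ℝ)) := by
  have key : (!![Real.cosh r * Real.cos θ + Real.sinh r * Real.cos (φ + θ),
        Real.cosh r * Real.sin θ + Real.sinh r * Real.sin (φ + θ);
        -Real.cosh r * Real.sin θ + Real.sinh r * Real.sin (φ + θ),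
        Real.cosh r * Real.cos θ - Real.sinh r * Real.cos (φ + θ)] : Matrix (Fin 2) (Fin 2) ℝ)
      = NormedSpace.exp
          ((r * Real.cos φ) • (!![1, 0; 0, -1] : Matrix (Fin 2) (Fin 2) ℝ)
            + (r * Real.sin φ) • (!![0, 1; 1, 0] : Matrix (Fin 2) (Fin 2) ℝ))
        * NormedSpace.exp (θ • (!![0, 1; -1, 0] : Matrix (Fin 2) (Fin 2) ℝ)) := by
    letI : SeminormedRing (Matrix (Fin 2) (Fin 2) ℝ) := Matrix.linftyOpSemiNormedRing
    letI : NormedRing (Matrix (Fin 2) (Fin 2) ℝ) := Matrix.linftyOpNormedRing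
    letI : NormedAlgebra ℝ (Matrix (Fin 2) (Fin 2) ℝ) := Matrix.linftyOpNormedAlgebra
    have hM : ((r * Real.cos φ) • (!![1, 0; 0, -1] : Matrix (Fin 2) (Fin 2) ℝ)
        + (r * Real.sin φ) • (!![0, 1; 1, 0] : Matrix (Fin 2) (Fin 2) ℝ))
        = r • (!![Real.cos φ, Real.sin φ; Real.sin φ, -Real.cos φ]) := by
      ext i j
      fin_cases i <;> fin_cases j <;> simp [Matrix.smul_apply] <;> ring
    have hsq : (!![Real.cos φ, Real.sin φ; Real.sin φ, -Real.cos φ] : Matrix (Fin 2) (Fin 2) ℝ) *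
        !![Real.cos φ, Real.sin φ; Real.sin φ, -Real.cos φ] = 1 := by
      ext i j
      fin_cases i <;> fin_cases j <;>
        simp [Matrix.mul_apply, Fin.sum_univ_two, Matrix.one_apply] <;>
        nlinarith [Real.sin_sq_add_cos_sq φ]
    have hZ : (!![0, 1; -1, 0] : Matrix (Fin 2) (Fin 2) ℝ) * !![0, 1; -1, 0] = -1 := by
      ext i j
      fin_cases i <;> fin_cases j <;>
        simp [Matrix.mul_apply, Fin.sum_univ_two, Matrix.one_apply]
    rw [hM]
    erw [exp_smul_of_sq_eq_one _ hsq, exp_smul_of_sq_eq_neg_one _ hZ]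
    ext i j
    fin_cases i <;> fin_cases j <;>
      simp [Matrix.mul_apply, Fin.sum_univ_two, Matrix.one_apply, Real.cos_add, Real.sin_add] <;>
      ring
  refine ⟨key, ?_⟩
  rw [← key]
  unfold Psi
  ext i j
  fin_cases i <;> fin_cases j <;>
    simp [mul_comm Complex.I, Complex.exp_mul_I, Complex.mul_re, Complex.mul_im,
      ← Complex.ofReal_add, Complex.cos_ofReal_re, Complex.sin_ofReal_re,
      Complex.cosh_ofReal_re, Complex.sinh_ofReal_re] <;> try ring
end

section
/- Let Z = [[0,1],[-1,0]] and let Ψ : ℂ² → M₂(ℝ) be defined by Ψ(x₁+iy₁, x₂+iy₂) = [[x₁+x₂, y₁+y₂],[y₁−y₂, x₂−x₁]]. Then for all z₁, z₂ ∈ ℂ and all θ ∈ ℝ, Ψ(e^{iθ}·z₁, e^{iθ}·z₂) = Ψ(z₁, z₂) · exp(θ·Z), where exp denotes the matrix exponential and the product on the right is matrix multiplication. -/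
open Real

attribute [local instance] Matrix.linftyOpNormedRing Matrix.linftyOpNormedAlgebra

/-- The real-algebra embedding of `ℂ` into `2×2` real matrices. -/
noncomputable def cMat : ℂ →ₐ[ℝ] Matrix (Fin 2) (Fin 2) ℝ where
  toFun z := !![z.re, z.im; -z.im, z.re]
  map_one' := by ext i j; fin_cases i <;> fin_cases j <;> simp
  map_mul' a b := by
    ext i j
    fin_cases i <;> fin_cases j <;>
      simp [Matrix.mul_apply, Fin.sum_univ_two] <;> ring
  map_zero' := by ext i j; fin_cases i <;> fin_cases j <;> simp
  map_add' a b := by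
    ext i j
    fin_cases i <;> fin_cases j <;> simp <;> ring
  commutes' r := by
    ext i j
    fin_cases i <;> fin_cases j <;>
      simp [Matrix.algebraMap_eq_diagonal, Matrix.diagonal]

lemma cMat_continuous : Continuous (cMat : ℂ → Matrix (Fin 2) (Fin 2) ℝ) := by
  show Continuous fun z : ℂ => !![z.re, z.im; -z.im, z.re]
  refine continuous_matrix fun i j => ?_
  fin_cases i <;> fin_cases j <;> simp <;> fun_prop

lemma exp_rot (θ : ℝ) :
    NormedSpace.exp (θ • (!![0, 1; -1, 0] : Matrix (Fin 2) (Fin 2) ℝ))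
      = !![Real.cos θ, Real.sin θ; -Real.sin θ, Real.cos θ] := by
  have h1 : θ • (!![0, 1; -1, 0] : Matrix (Fin 2) (Fin 2) ℝ) = cMat (θ * Complex.I) := by
    ext i j
    fin_cases i <;> fin_cases j <;> simp [cMat, Complex.cos_ofReal_re, Complex.sin_ofReal_re]
  rw [h1]
  erw [← NormedSpace.map_exp cMat cMat_continuous]
  rw [← Complex.exp_eq_exp_ℂ,
    Complex.exp_mul_I]
  ext i j
  fin_cases i <;> fin_cases j <;> simp [cMat, Complex.cos_ofReal_re, Complex.sin_ofReal_re]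

/-- Equivariance of `Ψ` under the circle action: for all `z₁, z₂ ∈ ℂ` and `θ ∈ ℝ`,
`Ψ(e^{iθ}z₁, e^{iθ}z₂) = Ψ(z₁, z₂) · exp(θ·Z)` with `Z = [[0,1],[-1,0]]`. -/
theorem Psi_circle_equivariant (z₁ z₂ : ℂ) (θ : ℝ) :
    Psi (Complex.exp (Complex.I * θ) * z₁, Complex.exp (Complex.I * θ) * z₂)
      = Psi (z₁, z₂) * NormedSpace.exp (θ • (!![0, 1; -1, 0] : Matrix (Fin 2) (Fin 2) ℝ)) := by
  rw [exp_rot]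
  have h : Complex.exp (Complex.I * θ) = Real.cos θ + Real.sin θ * Complex.I := by
    rw [mul_comm, Complex.exp_mul_I]; push_cast; ring
  ext i j
  fin_cases i <;> fin_cases j <;>
    simp [Psi, h, Matrix.mul_apply, Fin.sum_univ_two, Complex.cos_ofReal_re, Complex.sin_ofReal_re] <;> ring
end
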